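/- Let L ≥ 7 and let C ⊆ V be a nonempty subset such that the subgraph of G_L induced on C is not connected. Then γ(C) ≤ 6·|H| − 12, where H := V ∖ C. (This is the improved hop-count bound (gC1): a disconnected electron configuration admits at least 12 fewer hops than the trivial bound 6 N_h.) -/

import Mathlib

namespace TriTorus

/-! ### Generic reachability-within-a-set theory -/

variable {α β : Type*}

def Stp (adj : α → α → Prop) (S : Set α) (a b : α) : Prop := b ∈ S ∧ adj a b

def RIn (adj : α → α → Prop) (S : Set α) (x y : α) : Prop :=
  x ∈ S ∧ Relation.ReflTransGen (Stp adj S) x y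

theorem rin_refl {adj : α → α → Prop} {S : Set α} {x : α} (hx : x ∈ S) : RIn adj S x x :=
  ⟨hx, Relation.ReflTransGen.refl⟩

theorem rin_tail {adj : α → α → Prop} {S : Set α} {x y z : α}
    (h : RIn adj S x y) (hz : z ∈ S) (hyz : adj y z) : RIn adj S x z :=
  ⟨h.1, h.2.tail ⟨hz, hyz⟩⟩

theorem rin_mem_left {adj : α → α → Prop} {S : Set α} {x y : α} (h : RIn adj S x y) : x ∈ S := h.1

theorem rin_mem_right {adj : α → α → Prop} {S : Set α} {x y : α} (h : RIn adj S x y) : y ∈ S := by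
  obtain ⟨hx, hch⟩ := h
  induction hch with
  | refl => exact hx
  | tail _ h ih => exact h.1

theorem rin_trans {adj : α → α → Prop} {S : Set α} {x y z : α}
    (h1 : RIn adj S x y) (h2 : RIn adj S y z) : RIn adj S x z :=
  ⟨h1.1, h1.2.trans h2.2⟩

theorem rin_single {adj : α → α → Prop} {S : Set α} {x y : α}
    (hx : x ∈ S) (hy : y ∈ S) (hxy : adj x y) : RIn adj S x y :=
  rin_tail (rin_refl hx) hy hxy

theorem rin_symm {adj : α → α → Prop} (hsym : ∀ a b, adj a b → adj b a)
    {S : Set α} {x y : α} (h : RIn adj S x y) : RIn adj S y x := by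
  obtain ⟨hx, hch⟩ := h
  induction hch with
  | refl => exact rin_refl hx
  | tail hab h ih =>
    refine rin_trans (adj := adj) ⟨h.1, ?_⟩ ih
    exact Relation.ReflTransGen.single ⟨rin_mem_right ⟨hx, hab⟩, hsym _ _ h.2⟩

theorem rin_mono {adj : α → α → Prop} {S T : Set α} (hST : S ⊆ T) {x y : α}
    (h : RIn adj S x y) : RIn adj T x y := by
  obtain ⟨hx, hch⟩ := h
  refine ⟨hST hx, ?_⟩
  induction hch with
  | refl => exact Relation.ReflTransGen.refl
  | tail _ h ih => exact ih.tail ⟨hST h.1, h.2⟩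

theorem rin_map {adj : α → α → Prop} {adj' : β → β → Prop} {S : Set α} {f : α → β}
    (hf : ∀ a b, a ∈ S → b ∈ S → adj a b → adj' (f a) (f b)) {x y : α}
    (h : RIn adj S x y) : RIn adj' (f '' S) (f x) (f y) := by
  obtain ⟨hx, hch⟩ := h
  induction hch with
  | refl => exact rin_refl ⟨x, hx, rfl⟩
  | @tail b c hab h ih =>
    exact rin_tail ih ⟨c, h.1, rfl⟩ (hf b c (rin_mem_right ⟨hx, hab⟩) h.1 h.2)

/-- Splice lemma : reroute around a removed vertex `v` using local detours. -/
theorem rin_splice {adj : α → α → Prop} {S T : Set α} {v : α}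
    (hST : S \ {v} ⊆ T)
    (hdet : ∀ a b, a ∈ S → b ∈ S → a ≠ v → b ≠ v → adj a v → adj v b → RIn adj T a b)
    (hirr : ¬ adj v v) {x y : α}
    (h : RIn adj S x y) (hxv : x ≠ v) (hyv : y ≠ v) : RIn adj T x y := by
  obtain ⟨hx, hch⟩ := h
  have key : ∀ z, Relation.ReflTransGen (Stp adj S) x z →
      (z ∈ S) ∧ ((z ≠ v → RIn adj T x z) ∧
        (z = v → ∃ a, a ∈ S ∧ a ≠ v ∧ RIn adj T x a ∧ adj a v)) := by
    intro z hz
    induction hz with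
    | refl =>
      exact ⟨hx, fun _ => rin_refl (hST ⟨hx, hxv⟩), fun h => absurd h hxv⟩
    | @tail b c hab h ih =>
      obtain ⟨hbS, ih1, ih2⟩ := ih
      refine ⟨h.1, ?_, ?_⟩
      · intro hcv
        by_cases hbv : b = v
        · obtain ⟨a, haS, hav, hra, haadj⟩ := ih2 hbv
          exact rin_trans (hra) (hdet a c haS h.1 hav hcv haadj (hbv ▸ h.2))
        · exact rin_tail (ih1 hbv) (hST ⟨h.1, hcv⟩) h.2
      · intro hcv
        by_cases hbv : b = v
        · subst hbv; subst hcv; exact absurd h.2 hirr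
        · exact ⟨b, hbS, hbv, ih1 hbv, hcv ▸ h.2⟩
  exact (key y hch).2.1 hyv

/-! ### length-indexed chains and the edge-count lower bound -/

inductive ChainN (adj : α → α → Prop) (S : Set α) : ℕ → α → α → Prop
  | refl (x : α) (hx : x ∈ S) : ChainN adj S 0 x x
  | tail {n : ℕ} {x y z : α} : ChainN adj S n x y → z ∈ S → adj y z → ChainN adj S (n + 1) x z

theorem rin_iff_chainN {adj : α → α → Prop} {S : Set α} {x y : α} :
    RIn adj S x y ↔ ∃ n, ChainN adj S n x y := by
  constructor
  · rintro ⟨hx, hch⟩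
    induction hch with
    | refl => exact ⟨0, ChainN.refl x hx⟩
    | tail _ h ih => obtain ⟨n, hn⟩ := ih; exact ⟨n + 1, hn.tail h.1 h.2⟩
  · rintro ⟨n, hn⟩
    induction hn with
    | refl x hx => exact rin_refl hx
    | tail _ h h2 ih => exact rin_tail ih h h2



theorem chainN_mem_right {adj : α → α → Prop} {S : Set α} {n : ℕ} {x y : α}
    (h : ChainN adj S n x y) : y ∈ S := by
  induction h with
  | refl x hx => exact hx
  | tail _ h _ ih => exact h

theorem chainN_succ_inv {adj : α → α → Prop} {S : Set α} {n : ℕ} {x y : α}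
    (h : ChainN adj S (n + 1) x y) : ∃ w, ChainN adj S n x w ∧ y ∈ S ∧ adj w y := by
  cases h with
  | tail hc hS hadj => exact ⟨_, hc, hS, hadj⟩

theorem two_mul_card_le {adj : α → α → Prop} (hsym : ∀ a b, adj a b → adj b a)
    {S : Set α} (hfin : S.Finite) {z : α} (hz : z ∈ S)
    (hconn : ∀ y ∈ S, RIn adj S z y) :
    2 * (S.ncard - 1) ≤ {p : α × α | p.1 ∈ S ∧ p.2 ∈ S ∧ adj p.1 p.2}.ncard := by
  classical
  have hex : ∀ y ∈ S, ∃ n, ChainN adj S n z y := fun y hy => rin_iff_chainN.1 (hconn y hy)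
  set d : α → ℕ := fun y => if h : ∃ n, ChainN adj S n z y then Nat.find h else 0 with hd
  have hmain : ∀ y, y ∈ S → y ≠ z → ∃ w, w ∈ S ∧ adj w y ∧ d w < d y := by
    intro y hy hyz
    have h := hex y hy
    have hch : ChainN adj S (Nat.find h) z y := Nat.find_spec h
    cases hn : Nat.find h with
    | zero =>
      rw [hn] at hch
      cases hch
      exact absurd rfl hyz
    | succ m =>
      rw [hn] at hch
      obtain ⟨w, hc, hSy, hadj⟩ := chainN_succ_inv hch
      have hw : w ∈ S := chainN_mem_right hc
      have hdw : d w ≤ m := by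
        have hexw : ∃ n, ChainN adj S n z w := ⟨m, hc⟩
        simp only [hd, dif_pos hexw]
        exact Nat.find_le hc
      have hdy : d y = m + 1 := by simp only [hd, dif_pos h, hn]
      exact ⟨w, hw, hadj, by omega⟩
  set pa : α → α := fun y => if h : ∃ w, w ∈ S ∧ adj w y ∧ d w < d y then h.choose else z with hpa
  have hpaS : ∀ y, y ∈ S → y ≠ z → pa y ∈ S ∧ adj (pa y) y ∧ d (pa y) < d y := by
    intro y hy hyz
    have h := hmain y hy hyz
    simp only [hpa, dif_pos h]
    exact h.choose_spec
  set P := {p : α × α | p.1 ∈ S ∧ p.2 ∈ S ∧ adj p.1 p.2} with hP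
  have hPfin : P.Finite := (hfin.prod hfin).subset (fun p hp => ⟨hp.1, hp.2.1⟩)
  set Q1 := (fun y => (pa y, y)) '' (S \ {z}) with hQ1
  set Q2 := (fun y => (y, pa y)) '' (S \ {z}) with hQ2
  have hQ1P : Q1 ⊆ P := by
    rintro _ ⟨y, ⟨hy, hyz⟩, rfl⟩
    obtain ⟨h1, h2, _⟩ := hpaS y hy hyz
    exact ⟨h1, hy, h2⟩
  have hQ2P : Q2 ⊆ P := by
    rintro _ ⟨y, ⟨hy, hyz⟩, rfl⟩
    obtain ⟨h1, h2, _⟩ := hpaS y hy hyz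
    exact ⟨hy, h1, hsym _ _ h2⟩
  have hdisj : Disjoint Q1 Q2 := by
    rw [Set.disjoint_left]
    rintro _ ⟨y, ⟨hy, hyz⟩, rfl⟩ ⟨y', ⟨hy', hyz'⟩, heq⟩
    have h1 := (hpaS y hy hyz).2.2
    have h2 := (hpaS y' hy' hyz').2.2
    have e1 : y' = pa y := congrArg Prod.fst heq
    have e2 : pa y' = y := congrArg Prod.snd heq
    rw [e1] at e2 h2; rw [e2] at h2; omega
  have hc1 : Q1.ncard = (S \ {z}).ncard := by
    apply Set.ncard_image_of_injOn
    intro a _ b _ hab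
    exact congrArg Prod.snd hab
  have hc2 : Q2.ncard = (S \ {z}).ncard := by
    apply Set.ncard_image_of_injOn
    intro a _ b _ hab
    exact congrArg Prod.fst hab
  have hfin1 : Q1.Finite := hPfin.subset hQ1P
  have hfin2 : Q2.Finite := hPfin.subset hQ2P
  have hun : (Q1 ∪ Q2).ncard = Q1.ncard + Q2.ncard := Set.ncard_union_eq hdisj hfin1 hfin2
  have hle : (Q1 ∪ Q2).ncard ≤ P.ncard :=
    Set.ncard_le_ncard (Set.union_subset hQ1P hQ2P) hPfin
  have hdz : (S \ {z}).ncard = S.ncard - 1 := Set.ncard_diff_singleton_of_mem hz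
  omega


/-! ### The triangular lattice on ℤ² -/

def DZ : List (ℤ × ℤ) := [(1,0), (1,1), (0,1), (-1,0), (-1,-1), (0,-1)]

def adjZ (a b : ℤ × ℤ) : Prop := b - a ∈ DZ

def dd (n : ℕ) : ℤ × ℤ := DZ.getD (n % 6) 0

theorem dd_mod (n : ℕ) : dd n = dd (n % 6) := by simp [dd, Nat.mod_mod_of_dvd]

theorem dd_add_six (n : ℕ) : dd (n + 6) = dd n := by simp [dd, Nat.add_mod_right]

theorem dd_cases (n : ℕ) : n % 6 = 0 ∨ n % 6 = 1 ∨ n % 6 = 2 ∨ n % 6 = 3 ∨ n % 6 = 4 ∨ n % 6 = 5 := by omega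

theorem dd_inj6 : ∀ i < 6, ∀ j < 6, dd i = dd j → i = j := by decide

theorem dd_eq_iff {i j : ℕ} : dd i = dd j ↔ i % 6 = j % 6 := by
  constructor
  · intro h
    rw [dd_mod i, dd_mod j] at h
    exact dd_inj6 _ (Nat.mod_lt _ (by norm_num)) _ (Nat.mod_lt _ (by norm_num)) h
  · intro h
    rw [dd_mod i, dd_mod j, h]

theorem dd_mem_DZ (n : ℕ) : dd n ∈ DZ := by
  rcases dd_cases n with h | h | h | h | h | h <;> rw [dd_mod, h] <;> decide

theorem sub_add_cancel'' (v a b : ℤ × ℤ) : (v + a) - (v + b) = a - b := by ring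

theorem adjZ_add_dd (v : ℤ × ℤ) (n : ℕ) : adjZ v (v + dd n) := by
  show (v + dd n) - v ∈ DZ
  simpa using dd_mem_DZ n

theorem adjZ_dd_succ (v : ℤ × ℤ) (n : ℕ) : adjZ (v + dd n) (v + dd (n + 1)) := by
  show (v + dd (n+1)) - (v + dd n) ∈ DZ
  rw [sub_add_cancel'']
  have h6 : (n + 1) % 6 = (n % 6 + 1) % 6 := by omega
  rcases dd_cases n with h | h | h | h | h | h <;>
    rw [dd_mod n, dd_mod (n+1), h6, h] <;> decide

theorem adjZ_iff {v u : ℤ × ℤ} : adjZ v u ↔ ∃ j, j < 6 ∧ u = v + dd j := by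
  constructor
  · intro h
    have h' : u - v ∈ DZ := h
    simp only [DZ, List.mem_cons, List.not_mem_nil, or_false] at h'
    have hu : ∀ δ : ℤ × ℤ, u - v = δ → u = v + δ := fun δ hδ => by rw [← hδ]; ring
    rcases h' with h' | h' | h' | h' | h' | h'
    · exact ⟨0, by norm_num, by rw [hu _ h']; norm_num [dd, DZ]⟩
    · exact ⟨1, by norm_num, by rw [hu _ h']; norm_num [dd, DZ]⟩
    · exact ⟨2, by norm_num, by rw [hu _ h']; norm_num [dd, DZ]⟩
    · exact ⟨3, by norm_num, by rw [hu _ h']; norm_num [dd, DZ]⟩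
    · exact ⟨4, by norm_num, by rw [hu _ h']; norm_num [dd, DZ]⟩
    · exact ⟨5, by norm_num, by rw [hu _ h']; norm_num [dd, DZ]⟩
  · rintro ⟨j, _, rfl⟩
    exact adjZ_add_dd v j

theorem adjZ_irrefl (v : ℤ × ℤ) : ¬ adjZ v v := by
  show ¬ (v - v ∈ DZ)
  simp only [sub_self]
  decide

theorem adjZ_symm {a b : ℤ × ℤ} (h : adjZ a b) : adjZ b a := by
  have h' : b - a ∈ DZ := h
  simp only [DZ, List.mem_cons, List.not_mem_nil, or_false] at h'
  show a - b ∈ DZ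
  have haux : a - b = -(b - a) := by ring
  rw [haux]
  rcases h' with h' | h' | h' | h' | h' | h' <;> rw [h'] <;> decide

theorem adjZ_symm' : ∀ a b : ℤ × ℤ, adjZ a b → adjZ b a := fun _ _ => adjZ_symm

/-- neighbours of `v` inside `K` -/
def NvK (K : Set (ℤ × ℤ)) (v : ℤ × ℤ) : Set (ℤ × ℤ) := {u | u ∈ K ∧ adjZ v u}

def arc (v : ℤ × ℤ) (s len : ℕ) : Set (ℤ × ℤ) := {u | ∃ j, j < len ∧ u = v + dd (s + j)}

def IsGood (K : Set (ℤ × ℤ)) (v : ℤ × ℤ) : Prop :=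
  ∃ s len, 1 ≤ len ∧ len ≤ 3 ∧ NvK K v = arc v s len

def dpairsZ (K : Set (ℤ × ℤ)) : Set ((ℤ × ℤ) × (ℤ × ℤ)) :=
  {p | p.1 ∈ K ∧ p.2 ∈ K ∧ adjZ p.1 p.2}

/-! ### Existence of a good vertex -/

theorem mem_NvK_add_dd {K : Set (ℤ × ℤ)} {v : ℤ × ℤ} {j : ℕ} :
    v + dd j ∈ NvK K v ↔ v + dd j ∈ K := by
  constructor
  · exact fun h => h.1
  · exact fun h => ⟨h, adjZ_add_dd v j⟩

theorem good_or_bad (K : Set (ℤ × ℤ)) (hfin : K.Finite)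
    (hconn : ∀ x ∈ K, ∀ y ∈ K, RIn adjZ K x y) (h2 : 2 ≤ K.ncard)
    (r : ℕ) (e : ℤ × ℤ → ℤ) (hlin : ∀ a b : ℤ × ℤ, e (a + b) = e a + e b)
    (hsig : ∀ j, j < 6 → (e (dd j) ≤ 0 ↔ (dd j = dd r ∨ dd j = dd (r+1) ∨ dd j = dd (r+2)))) :
    (∃ v ∈ K, IsGood K v) ∨ (∃ v ∈ K, NvK K v = {v + dd r, v + dd (r+2)}) := by
  classical
  have hne : K.Nonempty := Set.nonempty_of_ncard_ne_zero (by omega)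
  obtain ⟨v, hvK, hmax⟩ := hfin.toFinset.exists_max_image e (by simpa using hne)
  rw [Set.Finite.mem_toFinset] at hvK
  have hmax' : ∀ u ∈ K, e u ≤ e v := fun u hu => hmax u (hfin.mem_toFinset.2 hu)
  -- the window property
  have hwin : ∀ u ∈ NvK K v, u = v + dd r ∨ u = v + dd (r+1) ∨ u = v + dd (r+2) := by
    rintro u ⟨huK, hadj⟩
    obtain ⟨j, hj6, rfl⟩ := adjZ_iff.1 hadj
    have he : e v + e (dd j) ≤ e v := by
      have := hmax' _ huK
      rwa [hlin] at this
    have hle : e (dd j) ≤ 0 := by omega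
    rcases (hsig j hj6).1 hle with h | h | h
    · exact Or.inl (by rw [h])
    · exact Or.inr (Or.inl (by rw [h]))
    · exact Or.inr (Or.inr (by rw [h]))
  -- NvK is nonempty
  have hnvne : (NvK K v).Nonempty := by
    obtain ⟨u, huK, huv⟩ := Set.exists_ne_of_one_lt_ncard (show 1 < K.ncard by omega) v
    obtain ⟨hvK', hch⟩ := hconn v hvK u huK
    rcases Relation.ReflTransGen.cases_head hch with h | ⟨b, hb, _⟩
    · exact absurd h.symm huv
    · exact ⟨b, hb.1, hb.2⟩
  by_cases h0 : v + dd r ∈ K <;> by_cases h1 : v + dd (r+1) ∈ K <;> by_cases hb2 : v + dd (r+2) ∈ K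
  · -- TTT : arc r 3
    refine Or.inl ⟨v, hvK, r, 3, by norm_num, by norm_num, ?_⟩
    ext u
    constructor
    · intro hu
      rcases hwin u hu with h | h | h
      · exact ⟨0, by norm_num, h⟩
      · exact ⟨1, by norm_num, h⟩
      · exact ⟨2, by norm_num, h⟩
    · rintro ⟨j, hj, rfl⟩
      interval_cases j
      · exact mem_NvK_add_dd.2 h0
      · exact mem_NvK_add_dd.2 h1
      · exact mem_NvK_add_dd.2 hb2
  · -- TTF : arc r 2
    refine Or.inl ⟨v, hvK, r, 2, by norm_num, by norm_num, ?_⟩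
    ext u
    constructor
    · intro hu
      rcases hwin u hu with h | h | h
      · exact ⟨0, by norm_num, h⟩
      · exact ⟨1, by norm_num, h⟩
      · exact absurd (h ▸ hu.1) hb2
    · rintro ⟨j, hj, rfl⟩
      interval_cases j
      · exact mem_NvK_add_dd.2 h0
      · exact mem_NvK_add_dd.2 h1
  · -- TFT : bad
    refine Or.inr ⟨v, hvK, ?_⟩
    ext u
    constructor
    · intro hu
      rcases hwin u hu with h | h | h
      · exact Or.inl h
      · exact absurd (h ▸ hu.1) h1
      · exact Or.inr h
    · rintro (rfl | rfl)
      · exact mem_NvK_add_dd.2 h0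
      · exact mem_NvK_add_dd.2 hb2
  · -- TFF : arc r 1
    refine Or.inl ⟨v, hvK, r, 1, by norm_num, by norm_num, ?_⟩
    ext u
    constructor
    · intro hu
      rcases hwin u hu with h | h | h
      · exact ⟨0, by norm_num, h⟩
      · exact absurd (h ▸ hu.1) h1
      · exact absurd (h ▸ hu.1) hb2
    · rintro ⟨j, hj, rfl⟩
      interval_cases j
      exact mem_NvK_add_dd.2 h0
  · -- FTT : arc (r+1) 2
    refine Or.inl ⟨v, hvK, r + 1, 2, by norm_num, by norm_num, ?_⟩
    ext u
    constructor
    · intro hu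
      rcases hwin u hu with h | h | h
      · exact absurd (h ▸ hu.1) h0
      · exact ⟨0, by norm_num, by rwa [Nat.add_zero]⟩
      · exact ⟨1, by norm_num, by rw [show r + 1 + 1 = r + 2 from rfl]; exact h⟩
    · rintro ⟨j, hj, rfl⟩
      interval_cases j
      · rw [Nat.add_zero]; exact mem_NvK_add_dd.2 h1
      · rw [show r + 1 + 1 = r + 2 from rfl]; exact mem_NvK_add_dd.2 hb2
  · -- FTF : arc (r+1) 1
    refine Or.inl ⟨v, hvK, r + 1, 1, by norm_num, by norm_num, ?_⟩
    ext u
    constructor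
    · intro hu
      rcases hwin u hu with h | h | h
      · exact absurd (h ▸ hu.1) h0
      · exact ⟨0, by norm_num, by rwa [Nat.add_zero]⟩
      · exact absurd (h ▸ hu.1) hb2
    · rintro ⟨j, hj, rfl⟩
      interval_cases j
      rw [Nat.add_zero]; exact mem_NvK_add_dd.2 h1
  · -- FFT : arc (r+2) 1
    refine Or.inl ⟨v, hvK, r + 2, 1, by norm_num, by norm_num, ?_⟩
    ext u
    constructor
    · intro hu
      rcases hwin u hu with h | h | h
      · exact absurd (h ▸ hu.1) h0
      · exact absurd (h ▸ hu.1) h1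
      · exact ⟨0, by norm_num, by rwa [Nat.add_zero]⟩
    · rintro ⟨j, hj, rfl⟩
      interval_cases j
      rw [Nat.add_zero]; exact mem_NvK_add_dd.2 hb2
  · -- FFF : impossible
    exfalso
    obtain ⟨u, hu⟩ := hnvne
    rcases hwin u hu with h | h | h
    · exact h0 (h ▸ hu.1)
    · exact h1 (h ▸ hu.1)
    · exact hb2 (h ▸ hu.1)

theorem dpairsZ_finite {K : Set (ℤ × ℤ)} (hfin : K.Finite) : (dpairsZ K).Finite :=
  (hfin.prod hfin).subset (fun p hp => ⟨hp.1, hp.2.1⟩)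

theorem good_vertex (K : Set (ℤ × ℤ)) (hfin : K.Finite)
    (hconn : ∀ x ∈ K, ∀ y ∈ K, RIn adjZ K x y) (h2 : 2 ≤ K.ncard)
    (hp : (dpairsZ K).ncard ≤ 11) : ∃ v ∈ K, IsGood K v := by
  classical
  have g3 := good_or_bad K hfin hconn h2 3 (fun p => 10 * p.2 + p.1)
    (fun a b => by simp [Prod.fst_add, Prod.snd_add]; ring) (by decide)
  have g0 := good_or_bad K hfin hconn h2 0 (fun p => -(10 * p.2 + p.1))
    (fun a b => by simp [Prod.fst_add, Prod.snd_add]; ring) (by decide)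
  have g2 := good_or_bad K hfin hconn h2 2 (fun p => 10 * p.1 - p.2)
    (fun a b => by simp [Prod.fst_add, Prod.snd_add]; ring) (by decide)
  have g5 := good_or_bad K hfin hconn h2 5 (fun p => -(10 * p.1 - p.2))
    (fun a b => by simp [Prod.fst_add, Prod.snd_add]; ring) (by decide)
  have g1 := good_or_bad K hfin hconn h2 1 (fun p => 9 * p.1 - 10 * p.2)
    (fun a b => by simp [Prod.fst_add, Prod.snd_add]; ring) (by decide)
  have g4 := good_or_bad K hfin hconn h2 4 (fun p => -(9 * p.1 - 10 * p.2))
    (fun a b => by simp [Prod.fst_add, Prod.snd_add]; ring) (by decide)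
  rcases g0 with h | b0; · exact h
  rcases g1 with h | b1; · exact h
  rcases g2 with h | b2; · exact h
  rcases g3 with h | b3; · exact h
  rcases g4 with h | b4; · exact h
  rcases g5 with h | b5; · exact h
  exfalso
  obtain ⟨v0, hv0, hn0⟩ := b0
  obtain ⟨v1, hv1, hn1⟩ := b1
  obtain ⟨v2, hv2, hn2⟩ := b2
  obtain ⟨v3, hv3, hn3⟩ := b3
  obtain ⟨v4, hv4, hn4⟩ := b4
  obtain ⟨v5, hv5, hn5⟩ := b5
  set w : Fin 6 → ℤ × ℤ := ![v0, v1, v2, v3, v4, v5] with hw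
  have hprop : ∀ i : Fin 6, w i ∈ K ∧ NvK K (w i) = {w i + dd i, w i + dd ((i : ℕ) + 2)} := by
    intro i
    fin_cases i <;> simp only [hw] <;>
      first
      | exact ⟨hv0, hn0⟩ | exact ⟨hv1, hn1⟩ | exact ⟨hv2, hn2⟩
      | exact ⟨hv3, hn3⟩ | exact ⟨hv4, hn4⟩ | exact ⟨hv5, hn5⟩
  have winj : Function.Injective w := by
    intro i j hij
    by_contra hne
    have hii := (hprop i).2
    have hjj := (hprop j).2
    rw [hij] at hii
    have hmem1 : w j + dd (i : ℕ) ∈ NvK K (w j) := by rw [hii]; exact Or.inl rfl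
    have hmem2 : w j + dd (j : ℕ) ∈ NvK K (w j) := by rw [hjj]; exact Or.inl rfl
    rw [hjj] at hmem1
    rw [hii] at hmem2
    have c1 : dd (i : ℕ) = dd (j : ℕ) ∨ dd (i : ℕ) = dd ((j : ℕ) + 2) := by
      rcases hmem1 with h | h
      · exact Or.inl (by exact add_left_cancel h)
      · exact Or.inr (by exact add_left_cancel h)
    have c2 : dd (j : ℕ) = dd (i : ℕ) ∨ dd (j : ℕ) = dd ((i : ℕ) + 2) := by
      rcases hmem2 with h | h
      · exact Or.inl (by exact add_left_cancel h)
      · exact Or.inr (by exact add_left_cancel h)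
    have hij6 : (i : ℕ) < 6 := i.2
    have hjj6 : (j : ℕ) < 6 := j.2
    have hne' : (i : ℕ) ≠ (j : ℕ) := fun h => hne (Fin.ext h)
    rcases c1 with h | h
    · exact hne' (by have := dd_eq_iff.1 h; omega)
    · rcases c2 with h' | h'
      · exact hne' (by have := dd_eq_iff.1 h'; omega)
      · have e1 := dd_eq_iff.1 h
        have e2 := dd_eq_iff.1 h'
        omega
  set F : Fin 6 × Bool → (ℤ × ℤ) × (ℤ × ℤ) :=
    fun q => (w q.1, w q.1 + dd ((q.1 : ℕ) + cond q.2 0 2)) with hF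
  have hFrange : Set.range F ⊆ dpairsZ K := by
    rintro _ ⟨⟨i, b⟩, rfl⟩
    refine ⟨(hprop i).1, ?_, adjZ_add_dd _ _⟩
    have h := (hprop i).2
    cases b
    · have : w i + dd ((i : ℕ) + 2) ∈ NvK K (w i) := by rw [h]; exact Or.inr rfl
      exact this.1
    · have : w i + dd ((i : ℕ) + 0) ∈ NvK K (w i) := by
        rw [h, Nat.add_zero]; exact Or.inl rfl
      exact this.1
  have hFinj : Function.Injective F := by
    rintro ⟨i, b⟩ ⟨i', b'⟩ heq
    have h1 : w i = w i' := congrArg Prod.fst heq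
    have hi : i = i' := winj h1
    subst hi
    have h2 : w i + dd ((i : ℕ) + cond b 0 2) = w i + dd ((i : ℕ) + cond b' 0 2) :=
      congrArg Prod.snd heq
    have h3 := dd_eq_iff.1 (add_left_cancel h2)
    have hi6 : (i : ℕ) < 6 := i.2
    cases b <;> cases b' <;> simp_all <;> omega
  have h12 : (Set.range F).ncard = 12 := by
    rw [← Set.image_univ, Set.ncard_image_of_injective _ hFinj, Set.ncard_univ]
    simp [Nat.card_eq_fintype_card]
  have := Set.ncard_le_ncard hFrange (dpairsZ_finite hfin)
  omega

/-! ### ring connectivity -/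

def ringZ (K : Set (ℤ × ℤ)) : Set (ℤ × ℤ) := {u | u ∉ K ∧ ∃ k ∈ K, adjZ k u}

theorem rin_dd_seg (S : Set (ℤ × ℤ)) (v : ℤ × ℤ) (a m : ℕ)
    (h : ∀ t, a ≤ t → t ≤ a + m → v + dd t ∈ S) :
    RIn adjZ S (v + dd a) (v + dd (a + m)) := by
  induction m with
  | zero => exact rin_refl (h a le_rfl (by omega))
  | succ m ihm =>
    have hseg := ihm (fun t ht1 ht2 => h t ht1 (by omega))
    exact rin_tail hseg (h (a + m + 1) (by omega) (by omega)) (adjZ_dd_succ v (a + m))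

theorem add_dd_ne (w : ℤ × ℤ) (t : ℕ) : w + dd t ≠ w := by
  intro h
  have h0 : dd t = 0 := by
    have := congrArg (fun z => z - w) h
    simpa using this
  have hmem := dd_mem_DZ t
  rw [h0] at hmem
  exact (by decide : (0 : ℤ × ℤ) ∉ DZ) hmem

theorem ring_single_conn (k : ℤ × ℤ) :
    ∀ x ∈ ringZ {k}, ∀ y ∈ ringZ {k}, RIn adjZ (ringZ {k}) x y := by
  have hmem : ∀ t : ℕ, k + dd t ∈ ringZ {k} := by
    intro t
    exact ⟨by simpa using add_dd_ne k t, k, rfl, adjZ_add_dd k t⟩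
  intro x hx y hy
  obtain ⟨-, k1, hk1, hadj1⟩ := hx
  obtain ⟨-, k2, hk2, hadj2⟩ := hy
  rw [Set.mem_singleton_iff] at hk1 hk2
  rw [hk1] at hadj1
  rw [hk2] at hadj2
  obtain ⟨i, hi, rfl⟩ := adjZ_iff.1 hadj1
  obtain ⟨j, hj, rfl⟩ := adjZ_iff.1 hadj2
  have hseg := rin_dd_seg (ringZ {k}) k i ((j + 6 - i) % 6) (fun t _ _ => hmem t)
  rwa [show dd (i + (j + 6 - i) % 6) = dd j from dd_eq_iff.2 (by omega)] at hseg

theorem ringZ_conn : ∀ (n : ℕ) (K : Set (ℤ × ℤ)), K.Finite → K.Nonempty →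
    (∀ x ∈ K, ∀ y ∈ K, RIn adjZ K x y) → (dpairsZ K).ncard ≤ 11 → K.ncard ≤ n →
    ∀ x ∈ ringZ K, ∀ y ∈ ringZ K, RIn adjZ (ringZ K) x y := by
  intro n
  induction n with
  | zero =>
    intro K hfin hne _ _ hcard
    have := (Set.ncard_pos hfin).2 hne
    omega
  | succ n ih =>
    intro K hfin hne hconn hp hcard
    by_cases h1 : K.ncard = 1
    · obtain ⟨k, rfl⟩ := Set.ncard_eq_one.1 h1
      exact ring_single_conn k
    · have h2 : 2 ≤ K.ncard := by
        have := (Set.ncard_pos hfin).2 hne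
        omega
      obtain ⟨v, hvK, s, len, hlen1, hlen3, harc⟩ := good_vertex K hfin hconn h2 hp
      have harc_mem : ∀ j, j < len → v + dd (s + j) ∈ K := by
        intro j hj
        have h : v + dd (s + j) ∈ NvK K v := by rw [harc]; exact ⟨j, hj, rfl⟩
        exact h.1
      set K' := K \ {v} with hK'
      have hK'sub : K' ⊆ K := Set.diff_subset
      have harcK' : ∀ j, j < len → v + dd (s + j) ∈ K' :=
        fun j hj => ⟨harc_mem j hj, by simpa using add_dd_ne v (s + j)⟩
      set P := {u : ℤ × ℤ | ∃ t, t ≤ 5 - len ∧ u = v + dd (s + len + t)} with hP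
      have hPnotK : ∀ u ∈ P, u ∉ K := by
        rintro _ ⟨t, ht, rfl⟩ hK
        have h : v + dd (s + len + t) ∈ NvK K v := ⟨hK, adjZ_add_dd _ _⟩
        rw [harc] at h
        obtain ⟨j, hj, heq⟩ := h
        have := dd_eq_iff.1 (add_left_cancel heq)
        omega
      have hPring : P ⊆ ringZ K := by
        rintro _ ⟨t, ht, rfl⟩
        exact ⟨hPnotK _ ⟨t, ht, rfl⟩, v, hvK, adjZ_add_dd _ _⟩
      have hvP : ∀ x, x ∉ K → adjZ v x → x ∈ P := by
        intro x hxK hadj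
        obtain ⟨j, hj, rfl⟩ := adjZ_iff.1 hadj
        set m := (j + 6 - s % 6) % 6 with hm
        have hdde : dd (s + m) = dd j := dd_eq_iff.2 (by omega)
        by_cases hml : m < len
        · exfalso
          apply hxK
          rw [show dd j = dd (s + m) from hdde.symm]
          exact harc_mem m hml
        · exact ⟨m - len, by omega, by rw [show s + len + (m - len) = s + m by omega, hdde]⟩
      have hK'ne : K'.Nonempty := by
        obtain ⟨u, huK, huv⟩ := Set.exists_ne_of_one_lt_ncard (show 1 < K.ncard by omega) v
        exact ⟨u, huK, by simpa using huv⟩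
      have hK'fin : K'.Finite := hfin.subset hK'sub
      have hK'card : K'.ncard = K.ncard - 1 := Set.ncard_diff_singleton_of_mem hvK
      have harc_conn : ∀ a b, a ∈ K → b ∈ K → a ≠ v → b ≠ v →
          adjZ a v → adjZ v b → RIn adjZ K' a b := by
        intro a b haK hbK _ _ hadjav hadjvb
        have ha : a ∈ NvK K v := ⟨haK, adjZ_symm hadjav⟩
        have hb : b ∈ NvK K v := ⟨hbK, hadjvb⟩
        rw [harc] at ha hb
        obtain ⟨i, hi, rfl⟩ := ha
        obtain ⟨j, hj, rfl⟩ := hb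
        have seg : ∀ i' j', i' ≤ j' → j' < len →
            RIn adjZ K' (v + dd (s + i')) (v + dd (s + j')) := by
          intro i' j' hij hjlen
          have h := rin_dd_seg K' v (s + i') (j' - i') (fun t ht1 ht2 => by
            rw [show t = s + (t - s) by omega]
            exact harcK' (t - s) (by omega))
          rwa [show s + i' + (j' - i') = s + j' by omega] at h
        rcases le_total i j with h | h
        · exact seg i j h hj
        · exact rin_symm adjZ_symm' (seg j i h hi)
      have hK'conn : ∀ x ∈ K', ∀ y ∈ K', RIn adjZ K' x y := by
        intro x hx y hy
        refine rin_splice (le_refl K') ?_ (adjZ_irrefl v)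
          (hconn x (hK'sub hx) y (hK'sub hy)) (by simpa using hx.2) (by simpa using hy.2)
        intro a b haK hbK hav hbv h1' h2'
        exact harc_conn a b haK hbK hav hbv h1' h2'
      have hpdsub : dpairsZ K' ⊆ dpairsZ K :=
        fun p hp' => ⟨hK'sub hp'.1, hK'sub hp'.2.1, hp'.2.2⟩
      have hIH := ih K' hK'fin hK'ne hK'conn
        (le_trans (Set.ncard_le_ncard hpdsub (dpairsZ_finite hfin)) hp) (by omega)
      have hpfirstP : v + dd (s + len) ∈ P := ⟨0, by omega, by rw [Nat.add_zero]⟩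
      have hpfirst_ringK' : v + dd (s + len) ∈ ringZ K' := by
        refine ⟨fun h => hPnotK _ hpfirstP (hK'sub h), ?_⟩
        refine ⟨v + dd (s + (len - 1)), harcK' (len - 1) (by omega), ?_⟩
        have h := adjZ_dd_succ v (s + (len - 1))
        rwa [show dd (s + (len - 1) + 1) = dd (s + len) from dd_eq_iff.2 (by omega)] at h
      have hPconn : ∀ a ∈ P, ∀ b ∈ P, RIn adjZ (ringZ K) a b := by
        have seg : ∀ t1 t2, t1 ≤ t2 → t2 ≤ 5 - len →
            RIn adjZ (ringZ K) (v + dd (s + len + t1)) (v + dd (s + len + t2)) := by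
          intro t1 t2 h12 h25
          have h := rin_dd_seg (ringZ K) v (s + len + t1) (t2 - t1) (fun t ht1 ht2 =>
            hPring ⟨t - (s + len), by omega, by rw [show s + len + (t - (s + len)) = t by omega]⟩)
          rwa [show s + len + t1 + (t2 - t1) = s + len + t2 by omega] at h
        rintro _ ⟨t1, ht1, rfl⟩ _ ⟨t2, ht2, rfl⟩
        rcases le_total t1 t2 with h | h
        · exact seg t1 t2 h ht2
        · exact rin_symm adjZ_symm' (seg t2 t1 h ht1)
      have hf1 : ∀ u, u ∈ ringZ K' → u ≠ v → u ∈ ringZ K := by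
        rintro u ⟨huK', k, hkK', hkadj⟩ huv
        refine ⟨?_, k, hK'sub hkK', hkadj⟩
        intro huK
        exact huK' ⟨huK, by simpa using huv⟩
      have hsplice : ∀ a b, a ∈ ringZ K' → b ∈ ringZ K' → a ≠ v → b ≠ v →
          RIn adjZ (ringZ K) a b := by
        intro a b ha hb hav hbv
        refine rin_splice ?_ ?_ (adjZ_irrefl v) (hIH a ha b hb) hav hbv
        · rintro u ⟨hu, huv⟩
          exact hf1 u hu (by simpa using huv)
        · intro a' b' haR hbR hav' hbv' h1' h2'
          have haP : a' ∈ P := hvP a' (fun h => haR.1 ⟨h, by simpa using hav'⟩) (adjZ_symm h1')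
          have hbP : b' ∈ P := hvP b' (fun h => hbR.1 ⟨h, by simpa using hbv'⟩) h2'
          exact hPconn a' haP b' hbP
      have hclassify : ∀ z, z ∈ ringZ K → z ∈ P ∨ (z ∈ ringZ K' ∧ z ≠ v) := by
        intro z hz
        by_cases hzR' : z ∈ ringZ K'
        · exact Or.inr ⟨hzR', fun h => hz.1 (h ▸ hvK)⟩
        · left
          obtain ⟨hzK, k, hkK, hkadj⟩ := hz
          have hkv : k = v := by
            by_contra hkv
            exact hzR' ⟨fun h => hzK (hK'sub h), k, ⟨hkK, by simpa using hkv⟩, hkadj⟩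
          exact hvP z hzK (hkv ▸ hkadj)
      have hto : ∀ z, z ∈ ringZ K → RIn adjZ (ringZ K) z (v + dd (s + len)) := by
        intro z hz
        rcases hclassify z hz with hzP | ⟨hzR', hzv⟩
        · exact hPconn z hzP _ hpfirstP
        · exact hsplice z _ hzR' hpfirst_ringK' hzv (add_dd_ne v (s + len))
      intro x hx y hy
      exact rin_trans (hto x hx) (rin_symm adjZ_symm' (hto y hy))

/-! ### the torus -/

section Torus

variable {L : ℕ} [NeZero L]

/-- cast from ℤ² to the torus -/
def cst (L : ℕ) [NeZero L] (p : ℤ × ℤ) : ZMod L × ZMod L := ((p.1 : ZMod L), (p.2 : ZMod L))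

/-- torus adjacency -/
def adjT (L : ℕ) [NeZero L] (x y : ZMod L × ZMod L) : Prop := ∃ δ ∈ DZ, y - x = cst L δ

theorem cst_add (p q : ℤ × ℤ) : cst L (p + q) = cst L p + cst L q := by
  simp [cst, Prod.ext_iff]

theorem cst_neg (p : ℤ × ℤ) : cst L (-p) = - cst L p := by
  simp [cst, Prod.ext_iff]

theorem small_cast_inj (hL : 7 ≤ L) {i j : ℤ} (hi : |i| ≤ 1) (hj : |j| ≤ 1)
    (h : (i : ZMod L) = (j : ZMod L)) : i = j := by
  have h0 : ((i - j : ℤ) : ZMod L) = 0 := by push_cast; rw [h]; ring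
  have hdvd : (L : ℤ) ∣ (i - j) := (ZMod.intCast_zmod_eq_zero_iff_dvd _ _).1 h0
  have hi' := abs_le.1 hi
  have hj' := abs_le.1 hj
  have hL' : (7 : ℤ) ≤ (L : ℤ) := by exact_mod_cast hL
  have := Int.eq_zero_of_abs_lt_dvd hdvd (by rw [abs_lt]; omega)
  omega

theorem DZ_bounds : ∀ δ ∈ DZ, |δ.1| ≤ 1 ∧ |δ.2| ≤ 1 := by decide

theorem cst_injOn_DZ (hL : 7 ≤ L) {δ δ' : ℤ × ℤ} (h1 : δ ∈ DZ) (h2 : δ' ∈ DZ)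
    (h : cst L δ = cst L δ') : δ = δ' := by
  have e1 := congrArg Prod.fst h
  have e2 := congrArg Prod.snd h
  have b1 := DZ_bounds δ h1
  have b2 := DZ_bounds δ' h2
  exact Prod.ext (small_cast_inj hL b1.1 b2.1 e1) (small_cast_inj hL b1.2 b2.2 e2)

theorem cst_ne_zero (hL : 7 ≤ L) {δ : ℤ × ℤ} (h : δ ∈ DZ) : cst L δ ≠ 0 := by
  intro h0
  have b := DZ_bounds δ h
  have e1 : (δ.1 : ZMod L) = ((0 : ℤ) : ZMod L) := by
    have := congrArg Prod.fst h0; simpa [cst] using this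
  have e2 : (δ.2 : ZMod L) = ((0 : ℤ) : ZMod L) := by
    have := congrArg Prod.snd h0; simpa [cst] using this
  have h1 : δ.1 = 0 := small_cast_inj hL b.1 (by norm_num) e1
  have h2 : δ.2 = 0 := small_cast_inj hL b.2 (by norm_num) e2
  have : δ = (0, 0) := Prod.ext h1 h2
  rw [this] at h
  exact (by decide : ((0,0) : ℤ × ℤ) ∉ DZ) h

theorem adjT_irrefl (hL : 7 ≤ L) (x : ZMod L × ZMod L) : ¬ adjT L x x := by
  rintro ⟨δ, hδ, h⟩
  rw [sub_self] at h
  exact cst_ne_zero hL hδ h.symm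

theorem adjT_symm' (hL : 7 ≤ L) : ∀ x y, adjT L x y → adjT L y x := by
  rintro x y ⟨δ, hδ, h⟩
  refine ⟨-δ, ?_, ?_⟩
  · revert hδ
    have : ∀ d ∈ DZ, -d ∈ DZ := by decide
    exact this δ
  · rw [cst_neg, ← h]; ring

end Torus

theorem rin_component {adj : α → α → Prop} {S : Set α} {x y : α} (h : RIn adj S x y) :
    RIn adj {w | RIn adj S x w} x y := by
  obtain ⟨hx, hch⟩ := h
  have key : ∀ b, Relation.ReflTransGen (Stp adj S) x b →
      RIn adj {w | RIn adj S x w} x b ∧ RIn adj S x b := by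
    intro b hb
    induction hb with
    | refl => exact ⟨rin_refl (rin_refl hx), rin_refl hx⟩
    | tail _ h ih => exact ⟨rin_tail ih.1 (rin_tail ih.2 h.1 h.2) h.2, rin_tail ih.2 h.1 h.2⟩
  exact (key y hch).1

section Torus2

variable {L : ℕ} [NeZero L]

def dpairsT (L : ℕ) [NeZero L] (S : Set (ZMod L × ZMod L)) :
    Set ((ZMod L × ZMod L) × (ZMod L × ZMod L)) :=
  {p | p.1 ∈ S ∧ p.2 ∈ S ∧ adjT L p.1 p.2}

def ringT (L : ℕ) [NeZero L] (K : Set (ZMod L × ZMod L)) : Set (ZMod L × ZMod L) :=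
  {u | u ∉ K ∧ ∃ k ∈ K, adjT L k u}

theorem natval_cast (u : ZMod L) : ((u.val : ℕ) : ZMod L) = u := by
  rw [ZMod.natCast_val, ZMod.cast_id]

theorem val_diff (hL : 7 ≤ L) {u w : ZMod L} (hu : u ≠ 0) (hw : w ≠ 0) {δ : ℤ}
    (hδ : |δ| ≤ 1) (h : w - u = (δ : ZMod L)) : (w.val : ℤ) - (u.val : ℤ) = δ := by
  have hu1 : u.val ≠ 0 := fun hh => hu ((ZMod.val_eq_zero u).1 hh)
  have hw1 : w.val ≠ 0 := fun hh => hw ((ZMod.val_eq_zero w).1 hh)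
  have hu2 : u.val < L := ZMod.val_lt u
  have hw2 : w.val < L := ZMod.val_lt w
  have h0 : (((w.val : ℤ) - (u.val : ℤ) - δ : ℤ) : ZMod L) = 0 := by
    push_cast
    rw [natval_cast, natval_cast, h]
    ring
  have hdvd : (L : ℤ) ∣ ((w.val : ℤ) - (u.val : ℤ) - δ) :=
    (ZMod.intCast_zmod_eq_zero_iff_dvd _ _).1 h0
  have hδ' := abs_le.1 hδ
  have hL' : (7 : ℤ) ≤ (L : ℤ) := by exact_mod_cast hL
  have hu1' : (1 : ℤ) ≤ (u.val : ℤ) := by exact_mod_cast Nat.one_le_iff_ne_zero.2 hu1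
  have hw1' : (1 : ℤ) ≤ (w.val : ℤ) := by exact_mod_cast Nat.one_le_iff_ne_zero.2 hw1
  have hu2' : (u.val : ℤ) < (L : ℤ) := by exact_mod_cast hu2
  have hw2' : (w.val : ℤ) < (L : ℤ) := by exact_mod_cast hw2
  have := Int.eq_zero_of_abs_lt_dvd hdvd (by rw [abs_lt]; omega)
  omega

theorem cluster_ring (hL : 7 ≤ L) (C : Set (ZMod L × ZMod L))
    (hp : (dpairsT L Cᶜ).ncard ≤ 11) (z : ZMod L × ZMod L) (hz : z ∈ Cᶜ) :
    (∀ u ∈ ringT L {w | RIn (adjT L) Cᶜ z w}, u ∈ C) ∧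
    (∀ u ∈ ringT L {w | RIn (adjT L) Cᶜ z w}, ∀ u' ∈ ringT L {w | RIn (adjT L) Cᶜ z w},
      RIn (adjT L) C u u') := by
  classical
  set K := {w | RIn (adjT L) Cᶜ z w} with hK
  have hKH : K ⊆ Cᶜ := fun w hw => rin_mem_right hw
  have hzK : z ∈ K := rin_refl hz
  have hclose : ∀ u ∈ K, ∀ w, w ∈ Cᶜ → adjT L u w → w ∈ K :=
    fun u hu w hw hadj => rin_tail hu hw hadj
  have hKreach : ∀ w ∈ K, RIn (adjT L) K z w := fun w hw => rin_component hw
  have hKconn : ∀ x ∈ K, ∀ y ∈ K, RIn (adjT L) K x y := by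
    intro x hx y hy
    exact rin_trans (rin_symm (adjT_symm' hL) (hKreach x hx)) (hKreach y hy)
  have hKfin : K.Finite := Set.toFinite K
  have hKne : K.Nonempty := ⟨z, hzK⟩
  -- K has at most 6 elements
  have hK6 : K.ncard ≤ 6 := by
    have h2m := two_mul_card_le (adjT_symm' hL) hKfin hzK hKreach
    have hsub : {p : (ZMod L × ZMod L) × (ZMod L × ZMod L) |
        p.1 ∈ K ∧ p.2 ∈ K ∧ adjT L p.1 p.2} ⊆ dpairsT L Cᶜ :=
      fun p hp' => ⟨hKH hp'.1, hKH hp'.2.1, hp'.2.2⟩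
    have := Set.ncard_le_ncard hsub (Set.toFinite _)
    have h1 := (Set.ncard_pos hKfin).2 hKne
    omega
  -- a row and a column missed by K
  have hmiss : ∀ f : (ZMod L × ZMod L) → ZMod L, ∃ a : ZMod L, ∀ k ∈ K, f k ≠ a := by
    intro f
    by_contra hcon
    push_neg at hcon
    have hcover : (Set.univ : Set (ZMod L)) ⊆ f '' K := by
      intro v _
      obtain ⟨k, hk, hke⟩ := hcon v
      exact ⟨k, hk, hke⟩
    have h1 : (Set.univ : Set (ZMod L)).ncard = L := by
      rw [Set.ncard_univ, Nat.card_eq_fintype_card, ZMod.card]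
    have h2 := Set.ncard_le_ncard hcover (hKfin.image f)
    have h3 := Set.ncard_image_le (s := K) (f := f) hKfin
    omega
  obtain ⟨a, ha⟩ := hmiss Prod.fst
  obtain ⟨b, hb⟩ := hmiss Prod.snd
  set ψ : ZMod L × ZMod L → ℤ × ℤ :=
    fun v => (((v.1 - a).val : ℤ), ((v.2 - b).val : ℤ)) with hψ
  have hψinj : Function.Injective ψ := by
    intro u w h
    have e1 : (u.1 - a).val = (w.1 - a).val := by
      have h1 := congrArg Prod.fst h
      simp only [hψ] at h1
      exact_mod_cast h1
    have e2 : (u.2 - b).val = (w.2 - b).val := by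
      have h1 := congrArg Prod.snd h
      simp only [hψ] at h1
      exact_mod_cast h1
    have f1 : u.1 - a = w.1 - a := by
      rw [← natval_cast (u.1 - a), ← natval_cast (w.1 - a), e1]
    have f2 : u.2 - b = w.2 - b := by
      rw [← natval_cast (u.2 - b), ← natval_cast (w.2 - b), e2]
    have : u.1 = w.1 := by
      have := congrArg (fun t => t + a) f1; simpa using this
    have h2 : u.2 = w.2 := by
      have := congrArg (fun t => t + b) f2; simpa using this
    exact Prod.ext this h2
  have hfwd : ∀ k ∈ K, ∀ m ∈ K, adjT L k m → adjZ (ψ k) (ψ m) := by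
    rintro k hk m hm ⟨δ, hδ, hdiff⟩
    have hb1 := DZ_bounds δ hδ
    have c1 : (m.1 - a) - (k.1 - a) = ((δ.1 : ℤ) : ZMod L) := by
      have := congrArg Prod.fst hdiff
      simp only [Prod.fst_sub] at this
      rw [show (m.1 - a) - (k.1 - a) = m.1 - k.1 by ring, this]
      rfl
    have c2 : (m.2 - b) - (k.2 - b) = ((δ.2 : ℤ) : ZMod L) := by
      have := congrArg Prod.snd hdiff
      simp only [Prod.snd_sub] at this
      rw [show (m.2 - b) - (k.2 - b) = m.2 - k.2 by ring, this]
      rfl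
    have v1 := val_diff hL (sub_ne_zero.2 (ha k hk)) (sub_ne_zero.2 (ha m hm)) hb1.1 c1
    have v2 := val_diff hL (sub_ne_zero.2 (hb k hk)) (sub_ne_zero.2 (hb m hm)) hb1.2 c2
    show ψ m - ψ k ∈ DZ
    have : ψ m - ψ k = δ := by
      apply Prod.ext
      · simpa [hψ] using v1
      · simpa [hψ] using v2
    rw [this]; exact hδ
  have hbwd : ∀ k m : ZMod L × ZMod L, adjZ (ψ k) (ψ m) → adjT L k m := by
    intro k m hadj
    have hδ : ψ m - ψ k ∈ DZ := hadj
    refine ⟨ψ m - ψ k, hδ, ?_⟩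
    apply Prod.ext
    · show m.1 - k.1 = (((ψ m).1 - (ψ k).1 : ℤ) : ZMod L)
      simp only [hψ]
      push_cast
      rw [natval_cast, natval_cast]
      ring
    · show m.2 - k.2 = (((ψ m).2 - (ψ k).2 : ℤ) : ZMod L)
      simp only [hψ]
      push_cast
      rw [natval_cast, natval_cast]
      ring
  set KZ := ψ '' K with hKZ
  have hKZfin : KZ.Finite := hKfin.image ψ
  have hKZne : KZ.Nonempty := ⟨ψ z, z, hzK, rfl⟩
  have hKZconn : ∀ x ∈ KZ, ∀ y ∈ KZ, RIn adjZ KZ x y := by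
    rintro _ ⟨k, hk, rfl⟩ _ ⟨m, hm, rfl⟩
    exact rin_map (fun p q hp hq hadj => hfwd p hp q hq hadj) (hKconn k hk m hm)
  have hKZ6 : KZ.ncard ≤ 6 := by
    rw [hKZ, Set.ncard_image_of_injective _ hψinj]; exact hK6
  have hKZpairs : (dpairsZ KZ).ncard ≤ 11 := by
    have hsub : dpairsZ KZ ⊆ (fun q : (ZMod L × ZMod L) × (ZMod L × ZMod L) =>
        (ψ q.1, ψ q.2)) '' (dpairsT L Cᶜ) := by
      rintro ⟨p1, p2⟩ ⟨⟨k, hk, rfl⟩, ⟨m, hm, rfl⟩, hadj⟩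
      exact ⟨(k, m), ⟨hKH hk, hKH hm, hbwd k m hadj⟩, rfl⟩
    have h1 := Set.ncard_le_ncard hsub ((Set.toFinite _).image _)
    have h2 := Set.ncard_image_le (s := dpairsT L Cᶜ)
      (f := fun q : (ZMod L × ZMod L) × (ZMod L × ZMod L) => (ψ q.1, ψ q.2)) (Set.toFinite _)
    omega
  have hring := ringZ_conn 6 KZ hKZfin hKZne hKZconn hKZpairs hKZ6
  set π : ℤ × ℤ → ZMod L × ZMod L :=
    fun p => (a + (p.1 : ZMod L), b + (p.2 : ZMod L)) with hπ
  have hπψ : ∀ v : ZMod L × ZMod L, π (ψ v) = v := by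
    intro v
    apply Prod.ext
    · show a + (((v.1 - a).val : ℤ) : ZMod L) = v.1
      push_cast
      rw [natval_cast]
      ring
    · show b + (((v.2 - b).val : ℤ) : ZMod L) = v.2
      push_cast
      rw [natval_cast]
      ring
  have hπhom : ∀ p q : ℤ × ℤ, adjZ p q → adjT L (π p) (π q) := by
    intro p q hadj
    refine ⟨q - p, hadj, ?_⟩
    apply Prod.ext
    · show (a + ((q.1 : ℤ) : ZMod L)) - (a + ((p.1 : ℤ) : ZMod L)) = (((q - p).1 : ℤ) : ZMod L)
      push_cast [Prod.fst_sub]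
      ring
    · show (b + ((q.2 : ℤ) : ZMod L)) - (b + ((p.2 : ℤ) : ZMod L)) = (((q - p).2 : ℤ) : ZMod L)
      push_cast [Prod.snd_sub]
      ring
  have hπaff : ∀ (p δ' : ℤ × ℤ), π (p + δ') = π p + cst L δ' := by
    intro p δ'
    apply Prod.ext
    · show a + (((p + δ').1 : ℤ) : ZMod L) = (a + ((p.1 : ℤ) : ZMod L)) + ((δ'.1 : ℤ) : ZMod L)
      push_cast [Prod.fst_add]
      ring
    · show b + (((p + δ').2 : ℤ) : ZMod L) = (b + ((p.2 : ℤ) : ZMod L)) + ((δ'.2 : ℤ) : ZMod L)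
      push_cast [Prod.snd_add]
      ring
  have hvalrange : ∀ v ∈ K, 1 ≤ (ψ v).1 ∧ (ψ v).1 ≤ (L : ℤ) - 1 ∧
      1 ≤ (ψ v).2 ∧ (ψ v).2 ≤ (L : ℤ) - 1 := by
    intro v hv
    have h1 : (v.1 - a).val ≠ 0 := fun hh => (ha v hv) (by
      have := (ZMod.val_eq_zero _).1 hh
      have h2 := sub_eq_zero.1 this
      exact h2)
    have h2 : (v.2 - b).val ≠ 0 := fun hh => (hb v hv) (by
      have := (ZMod.val_eq_zero _).1 hh
      exact sub_eq_zero.1 this)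
    have h3 : (v.1 - a).val < L := ZMod.val_lt _
    have h4 : (v.2 - b).val < L := ZMod.val_lt _
    refine ⟨?_, ?_, ?_, ?_⟩ <;> simp only [hψ] <;> [skip; skip; skip; skip] <;> omega
  have himgC : ∀ w ∈ ringZ KZ, π w ∈ C := by
    rintro w ⟨hwKZ, _, ⟨k, hkK, rfl⟩, hadj⟩
    by_contra hwC
    have hwH : π w ∈ Cᶜ := hwC
    have hadjT : adjT L k (π w) := by
      have := hπhom (ψ k) w hadj
      rwa [hπψ k] at this
    have hπwK : π w ∈ K := hclose k hkK (π w) hwH hadjT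
    have hδ : w - ψ k ∈ DZ := hadj
    have hbd := DZ_bounds _ hδ
    have hrange := hvalrange k hkK
    have c1' := abs_le.1 (by simpa using hbd.1 : |w.1 - (ψ k).1| ≤ 1)
    have c2' := abs_le.1 (by simpa using hbd.2 : |w.2 - (ψ k).2| ≤ 1)
    have hne1 : ((w.1 : ℤ) : ZMod L) ≠ 0 := by
      have hha := ha (π w) hπwK
      intro h0
      apply hha
      show a + ((w.1 : ℤ) : ZMod L) = a
      rw [h0, add_zero]
    have hne2 : ((w.2 : ℤ) : ZMod L) ≠ 0 := by
      have hhb := hb (π w) hπwK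
      intro h0
      apply hhb
      show b + ((w.2 : ℤ) : ZMod L) = b
      rw [h0, add_zero]
    have hw1ne0 : w.1 ≠ 0 := fun h => hne1 (by rw [h]; simp)
    have hw2ne0 : w.2 ≠ 0 := fun h => hne2 (by rw [h]; simp)
    have hw1neL : w.1 ≠ (L : ℤ) := fun h => hne1 (by rw [h]; simp)
    have hw2neL : w.2 ≠ (L : ℤ) := fun h => hne2 (by rw [h]; simp)
    have hL' : (7 : ℤ) ≤ (L : ℤ) := by exact_mod_cast hL
    have hψπ : ψ (π w) = w := by
      apply Prod.ext
      · show (((a + ((w.1 : ℤ) : ZMod L)) - a).val : ℤ) = w.1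
        rw [show (a + ((w.1 : ℤ) : ZMod L)) - a = ((w.1 : ℤ) : ZMod L) by ring]
        rw [ZMod.val_intCast]
        exact Int.emod_eq_of_lt (by omega) (by omega)
      · show (((b + ((w.2 : ℤ) : ZMod L)) - b).val : ℤ) = w.2
        rw [show (b + ((w.2 : ℤ) : ZMod L)) - b = ((w.2 : ℤ) : ZMod L) by ring]
        rw [ZMod.val_intCast]
        exact Int.emod_eq_of_lt (by omega) (by omega)
    exact hwKZ (hψπ ▸ (Set.mem_image_of_mem ψ hπwK))
  have hcover : ∀ u, u ∈ ringT L K → ∃ w, w ∈ ringZ KZ ∧ π w = u := by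
    rintro u ⟨huK, k, hkK, δ, hδ, hdiff⟩
    have hπeq : π (ψ k + δ) = u := by
      rw [hπaff, hπψ, ← hdiff]
      ring
    refine ⟨ψ k + δ, ⟨?_, ψ k, ⟨k, hkK, rfl⟩, ?_⟩, hπeq⟩
    · rintro ⟨m, hmK, hme⟩
      apply huK
      have hmu : m = u := by rw [← hπeq, ← hme, hπψ]
      rwa [← hmu]
    · show (ψ k + δ) - ψ k ∈ DZ
      simpa using hδ
  constructor
  · intro u hu
    obtain ⟨w, hw, rfl⟩ := hcover u hu
    exact himgC w hw
  · intro u hu u' hu'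
    obtain ⟨w, hw, rfl⟩ := hcover u hu
    obtain ⟨w', hw', rfl⟩ := hcover u' hu'
    have h := rin_map (adj := adjZ) (adj' := adjT L) (f := π)
      (fun p q _ _ hadj => hπhom p q hadj) (hring w hw w' hw')
    exact rin_mono (by rintro _ ⟨ww, hww, rfl⟩; exact himgC ww hww) h

end Torus2

section Torus3

variable {L : ℕ} [NeZero L]

theorem reach_h (n : ℕ) (x : ZMod L × ZMod L) :
    RIn (adjT L) Set.univ x (x + ((n : ZMod L), (0 : ZMod L))) := by
  induction n with
  | zero => simpa [Prod.mk_zero_zero] using rin_refl (Set.mem_univ x)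
  | succ n ihn =>
    refine rin_tail ihn (Set.mem_univ _) ⟨(1, 0), by decide, ?_⟩
    apply Prod.ext
    · show (x.1 + ((n + 1 : ℕ) : ZMod L)) - (x.1 + (n : ZMod L)) = ((1 : ℤ) : ZMod L)
      push_cast
      ring
    · show (x.2 + (0 : ZMod L)) - (x.2 + (0 : ZMod L)) = ((0 : ℤ) : ZMod L)
      push_cast
      ring

theorem reach_v (n : ℕ) (x : ZMod L × ZMod L) :
    RIn (adjT L) Set.univ x (x + ((0 : ZMod L), (n : ZMod L))) := by
  induction n with
  | zero => simpa [Prod.mk_zero_zero] using rin_refl (Set.mem_univ x)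
  | succ n ihn =>
    refine rin_tail ihn (Set.mem_univ _) ⟨(0, 1), by decide, ?_⟩
    apply Prod.ext
    · show (x.1 + (0 : ZMod L)) - (x.1 + (0 : ZMod L)) = ((0 : ℤ) : ZMod L)
      push_cast
      ring
    · show (x.2 + ((n + 1 : ℕ) : ZMod L)) - (x.2 + (n : ZMod L)) = ((1 : ℤ) : ZMod L)
      push_cast
      ring

theorem reach_univ (x y : ZMod L × ZMod L) : RIn (adjT L) Set.univ x y := by
  have h1 := reach_h (L := L) ((y - x).1.val) x
  have h2 := reach_v (L := L) ((y - x).2.val) (x + ((((y - x).1.val : ℕ) : ZMod L), (0 : ZMod L)))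
  have h3 := rin_trans h1 h2
  have he : (x + ((((y - x).1.val : ℕ) : ZMod L), (0 : ZMod L))) +
      ((0 : ZMod L), (((y - x).2.val : ℕ) : ZMod L)) = y := by
    apply Prod.ext
    · show (x.1 + ((y - x).1.val : ZMod L)) + 0 = y.1
      rw [natval_cast]
      show x.1 + (y.1 - x.1) + 0 = y.1
      ring
    · show (x.2 + (0 : ZMod L)) + ((y - x).2.val : ZMod L) = y.2
      rw [natval_cast]
      show x.2 + 0 + (y.2 - x.2) = y.2
      ring
  rwa [he] at h3

theorem conn_of_few (hL : 7 ≤ L) (C : Set (ZMod L × ZMod L))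
    (hp : (dpairsT L Cᶜ).ncard ≤ 11) :
    ∀ x ∈ C, ∀ y ∈ C, RIn (adjT L) C x y := by
  intro x hx y hy
  obtain ⟨-, hch⟩ := reach_univ x y
  have key : ∀ z, Relation.ReflTransGen (Stp (adjT L) Set.univ) x z →
      (z ∈ C → RIn (adjT L) C x z) ∧
      (z ∈ Cᶜ → ∃ aa, aa ∈ C ∧ RIn (adjT L) C x aa ∧
        aa ∈ ringT L {w | RIn (adjT L) Cᶜ z w}) := by
    intro z hz
    induction hz with
    | refl =>
      exact ⟨fun _ => rin_refl hx, fun hxH => absurd hx hxH⟩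
    | @tail p c hxp hstep ih =>
      have hadj : adjT L p c := hstep.2
      by_cases hcC : c ∈ C
      · refine ⟨fun _ => ?_, fun hcH => absurd hcC hcH⟩
        by_cases hpC : p ∈ C
        · exact rin_tail (ih.1 hpC) hcC hadj
        · have hpH : p ∈ Cᶜ := hpC
          obtain ⟨aa, haC, hra, haring⟩ := ih.2 hpH
          have hcring : c ∈ ringT L {w | RIn (adjT L) Cᶜ p w} := by
            refine ⟨fun hcK => (rin_mem_right hcK : c ∈ Cᶜ) hcC, p, rin_refl hpH, hadj⟩
          have hcr := (cluster_ring hL C hp p hpH).2 aa haring c hcring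
          exact rin_trans hra hcr
      · have hcH : c ∈ Cᶜ := hcC
        refine ⟨fun hcC' => absurd hcC' hcC, fun _ => ?_⟩
        by_cases hpC : p ∈ C
        · refine ⟨p, hpC, ih.1 hpC, ?_⟩
          exact ⟨fun hpK => (rin_mem_right hpK : p ∈ Cᶜ) hpC, c, rin_refl hcH,
            adjT_symm' hL _ _ hadj⟩
        · have hpH : p ∈ Cᶜ := hpC
          obtain ⟨aa, haC, hra, haring⟩ := ih.2 hpH
          refine ⟨aa, haC, hra, ?_⟩
          have hsame : {w | RIn (adjT L) Cᶜ c w} = {w | RIn (adjT L) Cᶜ p w} := by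
            ext w
            constructor
            · intro hw
              exact rin_trans (rin_tail (rin_refl hpH) hcH hadj) hw
            · intro hw
              exact rin_trans (rin_tail (rin_refl hcH) hpH (adjT_symm' hL _ _ hadj)) hw
          rw [hsame]
          exact haring
  exact (key y hch).1 hy

end Torus3

section Final

variable {L : ℕ} [NeZero L]

theorem adjT_iff_G (hL : 7 ≤ L) (G : SimpleGraph (ZMod L × ZMod L))
    (hG : ∀ x y : ZMod L × ZMod L, G.Adj x y ↔ x ≠ y ∧
      (y - x = (1, 0) ∨ y - x = (-1, 0) ∨ y - x = (0, 1) ∨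
       y - x = (0, -1) ∨ y - x = (1, 1) ∨ y - x = (-1, -1))) :
    ∀ x y, G.Adj x y ↔ adjT L x y := by
  intro x y
  rw [hG]
  constructor
  · rintro ⟨hne, h | h | h | h | h | h⟩
    · exact ⟨(1, 0), by decide, by rw [h]; simp [cst, Prod.ext_iff]⟩
    · exact ⟨(-1, 0), by decide, by rw [h]; simp [cst, Prod.ext_iff]⟩
    · exact ⟨(0, 1), by decide, by rw [h]; simp [cst, Prod.ext_iff]⟩
    · exact ⟨(0, -1), by decide, by rw [h]; simp [cst, Prod.ext_iff]⟩
    · exact ⟨(1, 1), by decide, by rw [h]; simp [cst, Prod.ext_iff]⟩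
    · exact ⟨(-1, -1), by decide, by rw [h]; simp [cst, Prod.ext_iff]⟩
  · rintro ⟨δ, hδ, hdiff⟩
    have hne : x ≠ y := by
      intro hxy
      rw [hxy, sub_self] at hdiff
      exact cst_ne_zero hL hδ hdiff.symm
    refine ⟨hne, ?_⟩
    have hd : δ = (1,0) ∨ δ = (1,1) ∨ δ = (0,1) ∨ δ = (-1,0) ∨ δ = (-1,-1) ∨ δ = (0,-1) := by
      simpa [DZ] using hδ
    rcases hd with rfl | rfl | rfl | rfl | rfl | rfl
    · exact Or.inl (by rw [hdiff]; simp [cst, Prod.ext_iff])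
    · exact Or.inr (Or.inr (Or.inr (Or.inr (Or.inl
        (by rw [hdiff]; simp [cst, Prod.ext_iff])))))
    · exact Or.inr (Or.inr (Or.inl
        (by rw [hdiff]; simp [cst, Prod.ext_iff])))
    · exact Or.inr (Or.inl
        (by rw [hdiff]; simp [cst, Prod.ext_iff]))
    · exact Or.inr (Or.inr (Or.inr (Or.inr (Or.inr
        (by rw [hdiff]; simp [cst, Prod.ext_iff])))))
    · exact Or.inr (Or.inr (Or.inr (Or.inl
        (by rw [hdiff]; simp [cst, Prod.ext_iff]))))

theorem rin_to_connected (hL : 7 ≤ L) (G : SimpleGraph (ZMod L × ZMod L))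
    (hGadj : ∀ x y, G.Adj x y ↔ adjT L x y) (C : Set (ZMod L × ZMod L)) (hC : C.Nonempty)
    (hrin : ∀ x ∈ C, ∀ y ∈ C, RIn (adjT L) C x y) : (G.induce C).Connected := by
  rw [SimpleGraph.connected_iff]
  refine ⟨?_, Set.nonempty_coe_sort.2 hC⟩
  intro u v
  obtain ⟨hmem, hch⟩ := hrin u.1 u.2 v.1 v.2
  have key : ∀ w, Relation.ReflTransGen (Stp (adjT L) C) u.1 w →
      ∃ hw : w ∈ C, (G.induce C).Reachable u ⟨w, hw⟩ := by
    intro w hw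
    induction hw with
    | refl => exact ⟨u.2, by rfl⟩
    | @tail b c hab h ih =>
      obtain ⟨hb, hreach⟩ := ih
      refine ⟨h.1, hreach.trans (SimpleGraph.Adj.reachable ?_)⟩
      show G.Adj b c
      exact (hGadj b c).2 h.2
  obtain ⟨hv, hr⟩ := key v.1 hch
  exact hr

theorem DZset_ncard : ({δ | δ ∈ DZ} : Set (ℤ × ℤ)).ncard = 6 := by
  have h : ({δ | δ ∈ DZ} : Set (ℤ × ℤ)) = ↑(DZ.toFinset) := by
    ext δ; simp [List.mem_toFinset]
  rw [h, Set.ncard_coe_finset]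
  decide

theorem Atot_ncard (hL : 7 ≤ L) (C : Set (ZMod L × ZMod L)) :
    {p : (ZMod L × ZMod L) × (ZMod L × ZMod L) | p.1 ∈ Cᶜ ∧ adjT L p.1 p.2}.ncard
      = 6 * (Cᶜ).ncard := by
  classical
  have himg : {p : (ZMod L × ZMod L) × (ZMod L × ZMod L) | p.1 ∈ Cᶜ ∧ adjT L p.1 p.2}
      = (fun q : (ZMod L × ZMod L) × (ℤ × ℤ) => (q.1, q.1 + cst L q.2)) ''
        ((Cᶜ) ×ˢ {δ | δ ∈ DZ}) := by
    ext p
    constructor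
    · rintro ⟨h1, δ, hδ, hdiff⟩
      refine ⟨(p.1, δ), ⟨h1, hδ⟩, ?_⟩
      show (p.1, p.1 + cst L δ) = p
      rw [← hdiff]
      exact Prod.ext rfl (by show p.1 + (p.2 - p.1) = p.2; ring)
    · rintro ⟨⟨x, δ⟩, ⟨hx, hδ⟩, rfl⟩
      exact ⟨hx, δ, hδ, by show (x + cst L δ) - x = cst L δ; ring⟩
  rw [himg]
  rw [Set.ncard_image_of_injOn ?hinj]
  case hinj =>
    rintro ⟨x, δ⟩ ⟨hx, hδ⟩ ⟨x', δ'⟩ ⟨hx', hδ'⟩ heq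
    have e1 : x = x' := congrArg Prod.fst heq
    have e2 : x + cst L δ = x' + cst L δ' := congrArg Prod.snd heq
    rw [e1] at e2
    have e3 : cst L δ = cst L δ' := add_left_cancel e2
    exact Prod.ext e1 (cst_injOn_DZ hL hδ hδ' e3)
  have hprod : ((Cᶜ) ×ˢ {δ | δ ∈ DZ}).ncard = (Cᶜ).ncard * ({δ | δ ∈ DZ} : Set (ℤ × ℤ)).ncard := by
    rw [← Nat.card_coe_set_eq, ← Nat.card_coe_set_eq, ← Nat.card_coe_set_eq]
    rw [Nat.card_congr (Equiv.Set.prod _ _), Nat.card_prod]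
  rw [hprod, DZset_ncard]
  ring

end Final

end TriTorus

/-- On the triangular-lattice torus with `L ≥ 7`: if the electron configuration `C`
is nonempty and not connected, then the number `γ(C)` of possible hops (pairs of a
hole adjacent to an electron) satisfies `γ(C) ≤ 6|H| - 12`, where `H = V ∖ C` is
the set of holes. -/
theorem disconnected_configuration_hop_bound
    (L : ℕ) [NeZero L] (hL : 7 ≤ L)
    (G : SimpleGraph (ZMod L × ZMod L))
    (hG : ∀ x y : ZMod L × ZMod L, G.Adj x y ↔ x ≠ y ∧
      (y - x = (1, 0) ∨ y - x = (-1, 0) ∨ y - x = (0, 1) ∨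
       y - x = (0, -1) ∨ y - x = (1, 1) ∨ y - x = (-1, -1)))
    (C : Set (ZMod L × ZMod L)) (hC : C.Nonempty)
    (hdisc : ¬ (G.induce C).Connected) :
    (({p : (ZMod L × ZMod L) × (ZMod L × ZMod L) |
        p.1 ∈ Cᶜ ∧ p.2 ∈ C ∧ G.Adj p.1 p.2}.ncard : ℤ) ≤
      6 * ((Cᶜ).ncard : ℤ) - 12) := by
  classical
  have hGadj := TriTorus.adjT_iff_G hL G hG
  have hset : {p : (ZMod L × ZMod L) × (ZMod L × ZMod L) |
        p.1 ∈ Cᶜ ∧ p.2 ∈ C ∧ G.Adj p.1 p.2}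
      = {p : (ZMod L × ZMod L) × (ZMod L × ZMod L) |
        p.1 ∈ Cᶜ ∧ p.2 ∈ C ∧ TriTorus.adjT L p.1 p.2} := by
    ext p
    simp only [Set.mem_setOf_eq, hGadj]
  have h12 : 12 ≤ (TriTorus.dpairsT L Cᶜ).ncard := by
    by_contra hcon
    push_neg at hcon
    exact hdisc (TriTorus.rin_to_connected hL G hGadj C hC
      (TriTorus.conn_of_few hL C (by omega)))
  have hdisj : Disjoint {p : (ZMod L × ZMod L) × (ZMod L × ZMod L) |
        p.1 ∈ Cᶜ ∧ p.2 ∈ C ∧ TriTorus.adjT L p.1 p.2} (TriTorus.dpairsT L Cᶜ) := by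
    rw [Set.disjoint_left]
    rintro p ⟨h1, h2, h3⟩ ⟨h1', h2', h3'⟩
    exact h2' h2
  have hunion : {p : (ZMod L × ZMod L) × (ZMod L × ZMod L) |
        p.1 ∈ Cᶜ ∧ p.2 ∈ C ∧ TriTorus.adjT L p.1 p.2} ∪ TriTorus.dpairsT L Cᶜ
      = {p : (ZMod L × ZMod L) × (ZMod L × ZMod L) | p.1 ∈ Cᶜ ∧ TriTorus.adjT L p.1 p.2} := by
    ext p
    constructor
    · rintro (⟨h1, h2, h3⟩ | ⟨h1, h2, h3⟩) <;> exact ⟨h1, h3⟩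
    · rintro ⟨h1, h3⟩
      by_cases h2 : p.2 ∈ C
      · exact Or.inl ⟨h1, h2, h3⟩
      · exact Or.inr ⟨h1, h2, h3⟩
  have hcards := Set.ncard_union_eq hdisj (Set.toFinite _) (Set.toFinite _)
  rw [hunion] at hcards
  rw [TriTorus.Atot_ncard hL C] at hcards
  rw [hset]
  omega
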